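/- Let Γ be a countable group (written additively) and let Ŷ = Y^Γ be the product of copies of the circle Y = ℝ/ℤ with the shift action S^β(ŷ)[γ] = ŷ[γ+β], and let •SIM be the set of shift-invariant Borel probability measures on Ŷ with the weak-* topology. Then the set of free sims — those μ̂ ∈ •SIM such that for every β ∈ Γ with β ≠ 0 the set {ŷ ∈ Ŷ : S^β(ŷ) = ŷ} has μ̂-measure zero — is a comeager subset of •SIM. -/

import Mathlib

open MeasureTheory

noncomputable section

/-- The shift action of `β : Γ` on `Ŷ = Y^Γ`: `(S^β yhat)[γ] = yhat[γ + β]`. -/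
def shiftMap {Γ : Type*} [AddGroup Γ] (β : Γ) (yhat : Γ → AddCircle (1 : ℝ)) :
    Γ → AddCircle (1 : ℝ) :=
  fun γ => yhat (γ + β)

/-- A Borel probability measure on `Ŷ = Y^Γ` is a *sim* if it is invariant under the
shift `S^β` for every `β : Γ`. -/
def IsSim {Γ : Type*} [AddGroup Γ] (μ : ProbabilityMeasure (Γ → AddCircle (1 : ℝ))) : Prop :=
  ∀ β : Γ, μ.toMeasure.map (shiftMap β) = μ.toMeasure

/-! ### Auxiliary material -/

open Filter Topology Set
open scoped Classical ENNReal NNReal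

instance factZeroLtOne : Fact ((0 : ℝ) < 1) := ⟨one_pos⟩

/-- Abbreviation for the circle. -/
abbrev Circ := AddCircle (1 : ℝ)

instance : NullSingletonClass (volume : Measure Circ) := by
  constructor
  intro x
  rw [AddCircle.add_projection_respects_measure (1 : ℝ) 0 (measurableSet_singleton x)]
  apply Set.Subsingleton.measure_zero
  rintro a ⟨(ha : (a : Circ) = x), ha2⟩ b ⟨(hb : (b : Circ) = x), hb2⟩
  have hab : (a : Circ) = (b : Circ) := by rw [ha, hb]
  have hmem : -a + b ∈ AddSubgroup.zmultiples (1 : ℝ) := QuotientAddGroup.eq.mp hab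
  obtain ⟨k, hk⟩ := AddSubgroup.mem_zmultiples_iff.mp hmem
  rw [zsmul_eq_mul, mul_one] at hk
  simp only [Set.mem_Ioc, zero_add] at ha2 hb2
  have h1 : (-1 : ℝ) < (k : ℝ) := by rw [hk]; linarith [ha2.1, ha2.2, hb2.1, hb2.2]
  have h2 : ((k : ℝ)) < 1 := by rw [hk]; linarith [ha2.1, ha2.2, hb2.1, hb2.2]
  have hk0 : k = 0 := by
    have h1' : (-1 : ℤ) < k := by exact_mod_cast h1
    have h2' : k < 1 := by exact_mod_cast h2
    omega
  have : b - a = 0 := by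
    have := hk
    rw [hk0] at this
    push_cast at this
    linarith [this]
  linarith [sub_eq_zero.mp this]

/-- The compression map `φ_t` on the circle. -/
def phiT (t : ℝ) (u : Circ) : Circ := ((t * ((AddCircle.equivIco 1 0 u : ℝ)) : ℝ) : Circ)

lemma measurable_phiT (t : ℝ) : Measurable (phiT t) := by
  have h1 : Measurable fun u : Circ => ((AddCircle.equivIco 1 0 u : ℝ)) :=
    measurable_subtype_coe.comp (AddCircle.measurableEquivIco 1 0).measurable
  exact AddCircle.measurable_mk'.comp (measurable_const.mul h1)

lemma phiT_injective {t : ℝ} (ht0 : 0 < t) (ht1 : t ≤ 1) : Function.Injective (phiT t) := by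
  intro a b hab
  have ha := (AddCircle.equivIco 1 0 a).2
  have hb := (AddCircle.equivIco 1 0 b).2
  simp only [Set.mem_Ico, zero_add] at ha hb
  have hma : t * ((AddCircle.equivIco 1 0 a : ℝ)) ∈ Set.Ico (0:ℝ) (0 + 1) :=
    Set.mem_Ico.mpr ⟨mul_nonneg ht0.le ha.1, by nlinarith [ha.1, ha.2]⟩
  have hmb : t * ((AddCircle.equivIco 1 0 b : ℝ)) ∈ Set.Ico (0:ℝ) (0 + 1) :=
    Set.mem_Ico.mpr ⟨mul_nonneg ht0.le hb.1, by nlinarith [hb.1, hb.2]⟩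
  have h := (AddCircle.coe_eq_coe_iff_of_mem_Ico hma hmb).mp hab
  have h2 : ((AddCircle.equivIco 1 0 a : ℝ)) = ((AddCircle.equivIco 1 0 b : ℝ)) :=
    mul_left_cancel₀ ht0.ne' h
  have h3 : AddCircle.equivIco 1 0 a = AddCircle.equivIco 1 0 b := Subtype.ext h2
  exact (AddCircle.equivIco 1 0).injective h3

lemma tendsto_phiT (u : Circ) :
    Tendsto (fun n : ℕ => phiT (1 / ((n : ℝ) + 1)) u) atTop (𝓝 0) := by
  have h1 : Tendsto (fun n : ℕ => (1 / ((n : ℝ) + 1)) * ((AddCircle.equivIco 1 0 u : ℝ)))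
      atTop (𝓝 0) := by
    simpa using tendsto_one_div_add_atTop_nhds_zero_nat.mul_const
      ((AddCircle.equivIco 1 0 u : ℝ))
  have h2 : Continuous ((↑) : ℝ → Circ) := AddCircle.continuous_mk' 1
  have := (h2.tendsto 0).comp h1
  exact this

section gamma

variable {Γ : Type*} [AddGroup Γ] [Countable Γ]

/-- Notation for the product space. -/
abbrev Xsp (Γ : Type*) := Γ → Circ

lemma continuous_shiftMap (β : Γ) : Continuous (shiftMap β : Xsp Γ → Xsp Γ) :=
  continuous_pi fun γ => continuous_apply (γ + β)

lemma measurable_shiftMap (β : Γ) : Measurable (shiftMap β : Xsp Γ → Xsp Γ) :=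
  (continuous_shiftMap β).measurable

lemma shiftMap_add (β : Γ) (x y : Xsp Γ) :
    shiftMap β (x + y) = shiftMap β x + shiftMap β y := rfl

lemma shiftMap_shiftMap (β β' : Γ) (y : Xsp Γ) :
    shiftMap β (shiftMap β' y) = shiftMap (β + β') y := by
  funext γ; simp [shiftMap, add_assoc]

/-- The Haar probability measure on `Ŷ`. -/
def ham (Γ : Type*) [AddGroup Γ] [Countable Γ] : Measure (Xsp Γ) :=
  Measure.addHaarMeasure ⊤

instance : IsProbabilityMeasure (ham Γ) := by
  constructor
  rw [← TopologicalSpace.PositiveCompacts.coe_top]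
  exact Measure.addHaarMeasure_self

instance : Measure.IsAddLeftInvariant (ham Γ) := by
  unfold ham; infer_instance

lemma map_shift_ham (β : Γ) : (ham Γ).map (shiftMap β) = ham Γ := by
  have hinv : Measure.IsAddLeftInvariant ((ham Γ).map (shiftMap β)) := by
    constructor
    intro g
    have key : ((g + ·) ∘ (shiftMap β : Xsp Γ → Xsp Γ))
        = shiftMap β ∘ ((shiftMap (-β) g) + ·) := by
      funext z; funext γ
      simp [shiftMap]
    rw [Measure.map_map (measurable_const_add g) (measurable_shiftMap β), key,
      ← Measure.map_map (measurable_shiftMap β) (measurable_const_add _),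
      map_add_left_eq_self]
  have hprob : IsProbabilityMeasure ((ham Γ).map (shiftMap β)) :=
    Measure.isProbabilityMeasure_map (measurable_shiftMap β).aemeasurable
  have h := Measure.addHaarMeasure_unique ((ham Γ).map (shiftMap β)) ⊤
  rw [h, TopologicalSpace.PositiveCompacts.coe_top, measure_univ, one_smul]
  rfl

/-- Projection onto the coordinates `0` and `β`. -/
def proj2 (β : Γ) : Xsp Γ → Circ × Circ := fun z => (z 0, z β)

lemma measurable_proj2 (β : Γ) : Measurable (proj2 (Γ := Γ) β) :=
  (measurable_pi_apply 0).prodMk (measurable_pi_apply β)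

lemma map_proj2_ham {β : Γ} (hβ : β ≠ 0) :
    (ham Γ).map (proj2 β) = (volume : Measure Circ).prod volume := by
  have hinv : Measure.IsAddLeftInvariant ((ham Γ).map (proj2 β)) := by
    constructor
    intro g
    set w : Xsp Γ := fun γ => if γ = 0 then g.1 else if γ = β then g.2 else 0 with hw
    have key : ((g + ·) ∘ (proj2 β : Xsp Γ → Circ × Circ)) = proj2 β ∘ (w + ·) := by
      funext z
      have hw0 : w 0 = g.1 := by simp [hw]
      have hwβ : w β = g.2 := by simp [hw, hβ]
      show g + proj2 β z = proj2 β (w + z)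
      simp [proj2, Prod.ext_iff, hw0, hwβ]
    rw [Measure.map_map (measurable_const_add g) (measurable_proj2 β), key,
      ← Measure.map_map (measurable_proj2 β) (measurable_const_add w),
      map_add_left_eq_self]
  have hprob : IsProbabilityMeasure ((ham Γ).map (proj2 β)) :=
    Measure.isProbabilityMeasure_map (measurable_proj2 β).aemeasurable
  haveI : ((volume : Measure Circ).prod (volume : Measure Circ)).IsAddLeftInvariant :=
    inferInstance
  haveI : IsProbabilityMeasure (volume : Measure Circ) :=
    ⟨by rw [AddCircle.measure_univ]; exact ENNReal.ofReal_one⟩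
  haveI : IsProbabilityMeasure ((volume : Measure Circ).prod (volume : Measure Circ)) :=
    inferInstance
  have h1 := Measure.addHaarMeasure_unique ((ham Γ).map (proj2 β)) ⊤
  have h2 := Measure.addHaarMeasure_unique ((volume : Measure Circ).prod (volume : Measure Circ)) ⊤
  rw [h1, h2, TopologicalSpace.PositiveCompacts.coe_top, measure_univ, measure_univ]

lemma prod_line_zero {t : ℝ} (ht0 : 0 < t) (ht1 : t ≤ 1) (c : Circ) :
    ((volume : Measure Circ).prod volume) {p : Circ × Circ | phiT t p.2 = phiT t p.1 + c} = 0 := by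
  have hmeas : MeasurableSet {p : Circ × Circ | phiT t p.2 = phiT t p.1 + c} :=
    measurableSet_eq_fun ((measurable_phiT t).comp measurable_snd)
      (((measurable_phiT t).comp measurable_fst).add_const c)
  rw [Measure.prod_apply hmeas]
  have hz : ∀ u : Circ, (volume : Measure Circ) {a : Circ | phiT t a = phiT t u + c} = 0 := by
    intro u
    apply Set.Subsingleton.measure_zero
    intro a (ha : phiT t a = phiT t u + c) b (hb : phiT t b = phiT t u + c)
    exact phiT_injective ht0 ht1 (ha.trans hb.symm)
  have : ∀ u : Circ, (volume : Measure Circ)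
      (Prod.mk u ⁻¹' {p : Circ × Circ | phiT t p.2 = phiT t p.1 + c}) = 0 := hz
  simp only [hz, this, lintegral_zero]

lemma ham_line_zero {β : Γ} (hβ : β ≠ 0) {t : ℝ} (ht0 : 0 < t) (ht1 : t ≤ 1) (c : Circ) :
    ham Γ {z : Xsp Γ | phiT t (z β) = phiT t (z 0) + c} = 0 := by
  have hmeas : MeasurableSet {p : Circ × Circ | phiT t p.2 = phiT t p.1 + c} :=
    measurableSet_eq_fun ((measurable_phiT t).comp measurable_snd)
      (((measurable_phiT t).comp measurable_fst).add_const c)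
  have : {z : Xsp Γ | phiT t (z β) = phiT t (z 0) + c}
      = proj2 β ⁻¹' {p : Circ × Circ | phiT t p.2 = phiT t p.1 + c} := rfl
  rw [this, ← Measure.map_apply (measurable_proj2 β) hmeas, map_proj2_ham hβ,
    prod_line_zero ht0 ht1 c]

/-- The coordinatewise compression map on `Ŷ`. -/
def PhiT (t : ℝ) : Xsp Γ → Xsp Γ := fun z γ => phiT t (z γ)

lemma measurable_PhiT (t : ℝ) : Measurable (PhiT t : Xsp Γ → Xsp Γ) :=
  measurable_pi_lambda _ fun γ => (measurable_phiT t).comp (measurable_pi_apply γ)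

/-- The perturbation map. -/
def pert (t : ℝ) : Xsp Γ × Xsp Γ → Xsp Γ := fun p => p.1 + PhiT t p.2

lemma measurable_pert (t : ℝ) : Measurable (pert t : Xsp Γ × Xsp Γ → Xsp Γ) :=
  measurable_fst.add ((measurable_PhiT t).comp measurable_snd)

/-- The perturbed measure. -/
def pertMeas (μ : Measure (Xsp Γ)) (t : ℝ) : Measure (Xsp Γ) :=
  (μ.prod (ham Γ)).map (pert t)

instance (μ : Measure (Xsp Γ)) [IsProbabilityMeasure μ] (t : ℝ) :
    IsProbabilityMeasure (pertMeas μ t) :=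
  Measure.isProbabilityMeasure_map (measurable_pert t).aemeasurable

lemma isClosed_fix (β : Γ) : IsClosed {y : Xsp Γ | shiftMap β y = y} :=
  isClosed_eq (continuous_shiftMap β) continuous_id

lemma pertMeas_free (μ : Measure (Xsp Γ)) [IsProbabilityMeasure μ] {β : Γ} (hβ : β ≠ 0)
    {t : ℝ} (ht0 : 0 < t) (ht1 : t ≤ 1) :
    pertMeas μ t {y : Xsp Γ | shiftMap β y = y} = 0 := by
  rw [pertMeas, Measure.map_apply (measurable_pert t) (isClosed_fix β).measurableSet]
  set B : Set (Xsp Γ × Xsp Γ) :=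
    {p | phiT t (p.2 β) = phiT t (p.2 0) + (p.1 0 - p.1 β)} with hB
  have hsub : (pert t) ⁻¹' {y : Xsp Γ | shiftMap β y = y} ⊆ B := by
    rintro ⟨x, z⟩ hp
    have h0 := congrFun hp 0
    simp only [shiftMap, zero_add] at h0
    have h1 : x β + phiT t (z β) = x 0 + phiT t (z 0) := h0
    have h2 : phiT t (z β) + x β = phiT t (z 0) + x 0 := by
      rw [add_comm, h1, add_comm]
    show phiT t (z β) = phiT t (z 0) + (x 0 - x β)
    rw [← add_sub_assoc]
    exact eq_sub_of_add_eq h2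
  apply measure_mono_null hsub
  have hBmeas : MeasurableSet B := by
    apply measurableSet_eq_fun
    · exact (measurable_phiT t).comp ((measurable_pi_apply β).comp measurable_snd)
    · exact ((measurable_phiT t).comp ((measurable_pi_apply 0).comp measurable_snd)).add
        (((measurable_pi_apply 0).comp measurable_fst).sub
          ((measurable_pi_apply β).comp measurable_fst))
  rw [Measure.prod_apply hBmeas]
  have hz : ∀ x : Xsp Γ, (ham Γ) (Prod.mk x ⁻¹' B) = 0 := by
    intro x
    have : Prod.mk x ⁻¹' B = {z : Xsp Γ | phiT t (z β) = phiT t (z 0) + (x 0 - x β)} := rfl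
    rw [this]
    exact ham_line_zero hβ ht0 ht1 _
  simp [hz]

lemma pertMeas_shift_invariant (μ : Measure (Xsp Γ)) [IsProbabilityMeasure μ]
    (hμ : ∀ β : Γ, μ.map (shiftMap β) = μ) (t : ℝ) (β : Γ) :
    (pertMeas μ t).map (shiftMap β) = pertMeas μ t := by
  rw [pertMeas, Measure.map_map (measurable_shiftMap β) (measurable_pert t)]
  have key : (shiftMap β ∘ (pert t : Xsp Γ × Xsp Γ → Xsp Γ))
      = pert t ∘ Prod.map (shiftMap β) (shiftMap β) := by
    funext p; funext γ
    simp [pert, shiftMap, PhiT]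
  rw [key, ← Measure.map_map (measurable_pert t)
    ((measurable_shiftMap β).prodMap (measurable_shiftMap β)),
    ← Measure.map_prod_map _ _ (measurable_shiftMap β) (measurable_shiftMap β),
    hμ β, map_shift_ham β]

end gamma


lemma isOpen_measure_lt {Γ : Type*} [AddGroup Γ] [Countable Γ]
    {F : Set (Xsp Γ)} (hF : IsClosed F) (c : ℝ≥0∞) :
    IsOpen {νP : ProbabilityMeasure (Xsp Γ) | νP.toMeasure F < c} := by
  rw [← isClosed_compl_iff]
  have hset : {νP : ProbabilityMeasure (Xsp Γ) | νP.toMeasure F < c}ᶜ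
      = {νP : ProbabilityMeasure (Xsp Γ) | c ≤ νP.toMeasure F} := by
    ext νP; simp [not_lt]
  rw [hset]
  refine isClosed_of_closure_subset fun μ hμ => ?_
  haveI hne : (𝓝[{νP : ProbabilityMeasure (Xsp Γ) | c ≤ νP.toMeasure F}] μ).NeBot :=
    mem_closure_iff_nhdsWithin_neBot.mp hμ
  have hlim : Tendsto (id : ProbabilityMeasure (Xsp Γ) → ProbabilityMeasure (Xsp Γ))
      (𝓝[{νP : ProbabilityMeasure (Xsp Γ) | c ≤ νP.toMeasure F}] μ) (𝓝 μ) :=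
    tendsto_id.mono_left nhdsWithin_le_nhds
  have key := ProbabilityMeasure.limsup_measure_closed_le_of_tendsto hlim hF
  have hev : ∀ᶠ νP in 𝓝[{νP : ProbabilityMeasure (Xsp Γ) | c ≤ νP.toMeasure F}] μ,
      c ≤ νP.toMeasure F :=
    eventually_mem_nhdsWithin.mono fun νP hνP => hνP
  exact le_trans (le_limsup_of_frequently_le' hev.frequently) key

lemma dense_free_sims {Γ : Type*} [AddGroup Γ] [Countable Γ] :
    Dense {μhat : {μ : ProbabilityMeasure (Xsp Γ) // IsSim μ} |
      ∀ β : Γ, β ≠ 0 → μhat.1.toMeasure {yhat : Xsp Γ | shiftMap β yhat = yhat} = 0} := by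
  intro μhat
  set μ : Measure (Xsp Γ) := μhat.1.toMeasure with hμdef
  haveI : IsProbabilityMeasure μ := μhat.1.2
  have ht0 : ∀ n : ℕ, (0:ℝ) < 1 / ((n:ℝ) + 1) := fun n => by positivity
  have ht1 : ∀ n : ℕ, (1:ℝ) / ((n:ℝ) + 1) ≤ 1 := fun n => by
    rw [div_le_one (by positivity)]
    linarith [Nat.cast_nonneg (α := ℝ) n]
  have hsim : ∀ n : ℕ, IsSim (⟨pertMeas μ (1/((n:ℝ)+1)), inferInstance⟩ :
      ProbabilityMeasure (Xsp Γ)) := by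
    intro n β
    exact pertMeas_shift_invariant μ (fun β' => μhat.2 β') _ β
  set seq : ℕ → {ν : ProbabilityMeasure (Xsp Γ) // IsSim ν} :=
    fun n => ⟨⟨pertMeas μ (1/((n:ℝ)+1)), inferInstance⟩, hsim n⟩ with hseq
  refine mem_closure_of_tendsto (b := atTop) (f := seq) ?_ ?_
  · rw [tendsto_subtype_rng]
    rw [ProbabilityMeasure.tendsto_iff_forall_integral_tendsto]
    intro f
    have hrw : (fun n : ℕ => ∫ ω, f ω ∂((seq n).1 : Measure (Xsp Γ)))
        = fun n : ℕ => ∫ p : Xsp Γ × Xsp Γ, f (pert (1/((n:ℝ)+1)) p) ∂(μ.prod (ham Γ)) := by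
      funext n
      show ∫ ω, f ω ∂((μ.prod (ham Γ)).map (pert (1/((n:ℝ)+1)))) = _
      exact integral_map (measurable_pert _).aemeasurable
        f.continuous.measurable.aestronglyMeasurable
    have hlim : ∫ ω, f ω ∂(μhat.1 : Measure (Xsp Γ))
        = ∫ p : Xsp Γ × Xsp Γ, f p.1 ∂(μ.prod (ham Γ)) := by
      rw [show ∫ p : Xsp Γ × Xsp Γ, f p.1 ∂(μ.prod (ham Γ))
          = ∫ ω, f ω ∂((μ.prod (ham Γ)).map Prod.fst) from
        (integral_map measurable_fst.aemeasurable
          f.continuous.measurable.aestronglyMeasurable).symm,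
        Measure.map_fst_prod, measure_univ, one_smul]
    show Tendsto (fun n : ℕ => ∫ ω, f ω ∂((seq n).1 : Measure (Xsp Γ))) atTop _
    rw [hrw, hlim]
    apply tendsto_integral_of_dominated_convergence (bound := fun _ => ‖f‖)
    · intro n
      exact (f.continuous.measurable.comp (measurable_pert _)).aestronglyMeasurable
    · exact integrable_const _
    · intro n
      exact Filter.Eventually.of_forall fun p => f.norm_coe_le_norm _
    · apply Filter.Eventually.of_forall
      intro p
      have hz : Tendsto (fun n : ℕ => PhiT (Γ := Γ) (1/((n:ℝ)+1)) p.2) atTop (𝓝 0) := by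
        rw [tendsto_pi_nhds]
        intro γ
        have := tendsto_phiT (p.2 γ)
        simpa [PhiT] using this
      have hpert : Tendsto (fun n : ℕ => pert (1/((n:ℝ)+1)) p) atTop (𝓝 p.1) := by
        have := (tendsto_const_nhds (x := p.1) (f := atTop (α := ℕ))).add hz
        simpa [pert] using this
      exact (f.continuous.tendsto p.1).comp hpert
  · refine Filter.Eventually.of_forall fun n => ?_
    intro β hβ
    exact pertMeas_free μ hβ (ht0 n) (ht1 n)

/-! ### The main theorem -/

/-- In the space `•SIM` of shift-invariant Borel probability measures on `Ŷ = Y^Γ`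
(with the weak-* topology), the *free* sims — those giving measure zero to the
fixed-point set of `S^β` for every `β ≠ 0` — form a comeager subset. -/
theorem free_sims_comeager {Γ : Type*} [AddGroup Γ] [Countable Γ] :
    {μhat : {μ : ProbabilityMeasure (Γ → AddCircle (1 : ℝ)) // IsSim μ} |
        ∀ β : Γ, β ≠ 0 →
          μhat.1.toMeasure {yhat : Γ → AddCircle (1 : ℝ) | shiftMap β yhat = yhat} = 0} ∈
      residual {μ : ProbabilityMeasure (Γ → AddCircle (1 : ℝ)) // IsSim μ} := by
  classical
  set SIMt := {μ : ProbabilityMeasure (Γ → AddCircle (1 : ℝ)) // IsSim μ}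
  set Fix : Γ → Set (Xsp Γ) := fun β => {yhat : Xsp Γ | shiftMap β yhat = yhat} with hFix
  have key : ∀ β : Γ, β ≠ 0 →
      {μhat : SIMt | μhat.1.toMeasure (Fix β) = 0} ∈ residual SIMt := by
    intro β hβ
    have heq : {μhat : SIMt | μhat.1.toMeasure (Fix β) = 0}
        = ⋂ n : ℕ, (Subtype.val ⁻¹'
            {νP : ProbabilityMeasure (Xsp Γ) | νP.toMeasure (Fix β) < ((n:ℝ≥0∞)+1)⁻¹}) := by
      ext μhat
      simp only [Set.mem_iInter, Set.mem_preimage, Set.mem_setOf_eq]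
      constructor
      · intro h n
        rw [h]
        exact ENNReal.inv_pos.mpr (by simp)
      · intro h
        by_contra hne
        obtain ⟨n, hn⟩ := ENNReal.exists_inv_nat_lt hne
        have hle : ((n:ℝ≥0∞)+1)⁻¹ ≤ ((n:ℝ≥0∞))⁻¹ :=
          ENNReal.inv_le_inv.mpr le_self_add
        exact absurd (h n) (not_lt.mpr (hle.trans hn.le))
    rw [heq]
    refine (countable_iInter_mem).mpr fun n => ?_
    apply residual_of_dense_open
    · exact (isOpen_measure_lt (isClosed_fix β) _).preimage continuous_subtype_val
    · refine dense_free_sims.mono fun μhat hμhat => ?_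
      simp only [Set.mem_preimage, Set.mem_setOf_eq]
      rw [hμhat β hβ]
      exact ENNReal.inv_pos.mpr (by simp)
  have htarget : {μhat : SIMt | ∀ β : Γ, β ≠ 0 → μhat.1.toMeasure (Fix β) = 0}
      = ⋂ β : Γ, {μhat : SIMt | β ≠ 0 → μhat.1.toMeasure (Fix β) = 0} := by
    ext μhat
    simp only [Set.mem_iInter, Set.mem_setOf_eq]
  show {μhat : SIMt | ∀ β : Γ, β ≠ 0 → μhat.1.toMeasure (Fix β) = 0} ∈ residual SIMt
  rw [htarget]
  refine (countable_iInter_mem).mpr fun β => ?_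
  by_cases hβ : β = 0
  · have : {μhat : SIMt | β ≠ 0 → μhat.1.toMeasure (Fix β) = 0} = Set.univ := by
      ext μhat; simp [hβ]
    rw [this]
    exact Filter.univ_mem
  · have : {μhat : SIMt | β ≠ 0 → μhat.1.toMeasure (Fix β) = 0}
        = {μhat : SIMt | μhat.1.toMeasure (Fix β) = 0} := by
      ext μhat; simp [hβ]
    rw [this]
    exact key β hβ
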